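/- Let A=(a_{ij}) be an n×n simply-laced indecomposable generalized Cartan matrix with n≥2 (that is, every off-diagonal entry of A is 0 or −1, and the graph on {1,…,n} with an edge between i and j whenever a_{ij}≠0 is connected), and let F be a field. Then K_2(A,F) is isomorphic to K_2(F). -/

import Mathlib

/-!
Common definitions: presentations of the abelian groups `K₂(F)`, `K₂(2,F)` and `K₂(A,F)`
(Rehmann–Morita).  "The abelian group generated by symbols subject to relations" is
formalized as the abelianization of the corresponding presented group.
-/

variable (F : Type) [Field F]

/-- Relators for `K₂(F)`: the Steinberg symbol relations (A1)-(A3).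
(A3) `{u, 1-u} = 1` (for `u ≠ 1`) is encoded as: for units `u, w` with `(w : F) = 1 - u`
(which forces `u ≠ 1`), `{u, w}` is a relator. -/
def K2Rels : Set (FreeGroup (Fˣ × Fˣ)) :=
  {r | (∃ t u v : Fˣ, r = FreeGroup.of (t * u, v) * (FreeGroup.of (t, v) * FreeGroup.of (u, v))⁻¹) ∨
       (∃ t u v : Fˣ, r = FreeGroup.of (t, u * v) * (FreeGroup.of (t, u) * FreeGroup.of (t, v))⁻¹) ∨
       (∃ u w : Fˣ, (w : F) = 1 - (u : F) ∧ r = FreeGroup.of (u, w))}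

/-- `K₂(F)`: the abelian group generated by the symbols `{u,v}`, `u v ∈ Fˣ`,
subject to the Steinberg symbol relations (A1)-(A3). -/
def K2 : Type := Abelianization (PresentedGroup (K2Rels F))

noncomputable instance : CommGroup (K2 F) := inferInstanceAs (CommGroup (Abelianization _))

/-- The Steinberg symbol `{u,v}` in `K₂(F)`. -/
def K2.sym (u v : Fˣ) : K2 F := Abelianization.of (PresentedGroup.of (u, v))

/-- The subgroup `m·K₂(F)` of `m`-th powers of elements of `K₂(F)`. -/
noncomputable def K2.powSubgroup (m : ℕ) : Subgroup (K2 F) := Subgroup.closure {x | ∃ y : K2 F, x = y ^ m}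

/-- Relators for `K₂(2,F)`: the Steinberg cocycle relations (B1)-(B4). -/
def K2SLRels : Set (FreeGroup (Fˣ × Fˣ)) :=
  {r | (∃ t u v : Fˣ, r = FreeGroup.of (t, u) * FreeGroup.of (t * u, v) *
          (FreeGroup.of (t, u * v) * FreeGroup.of (u, v))⁻¹) ∨
       (r = FreeGroup.of ((1 : Fˣ), (1 : Fˣ))) ∨
       (∃ u v : Fˣ, r = FreeGroup.of (u, v) * (FreeGroup.of (u⁻¹, v⁻¹))⁻¹) ∨
       (∃ u v w : Fˣ, (w : F) = 1 - (u : F) ∧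
          r = FreeGroup.of (u, v) * (FreeGroup.of (u, w * v))⁻¹)}

/-- `K₂(2,F)`: the abelian group generated by the symbols `{u,v}`, `u v ∈ Fˣ`,
subject to the Steinberg cocycle relations (B1)-(B4). -/
def K2SL : Type := Abelianization (PresentedGroup (K2SLRels F))

noncomputable instance : CommGroup (K2SL F) := inferInstanceAs (CommGroup (Abelianization _))

/-- The Steinberg cocycle `{u,v}` in `K₂(2,F)`. -/
def K2SL.sym (u v : Fˣ) : K2SL F := Abelianization.of (PresentedGroup.of (u, v))

/-- The subgroup `m⟨{u²,v}⟩` of `K₂(2,F)` generated by the elements `{u²,v}^m`, `u v ∈ Fˣ`. -/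
noncomputable def K2SL.sqSubgroup (m : ℤ) : Subgroup (K2SL F) :=
  Subgroup.closure {x | ∃ u v : Fˣ, x = (K2SL.sym F (u ^ 2) v) ^ m}

/-- A generalized Cartan matrix: `a_{ii} = 2`, off-diagonal entries `≤ 0`,
and `a_{ij} = 0 ↔ a_{ji} = 0`. -/
def IsGCM {n : ℕ} (A : Matrix (Fin n) (Fin n) ℤ) : Prop :=
  (∀ i, A i i = 2) ∧ (∀ i j, i ≠ j → A i j ≤ 0) ∧ (∀ i j, A i j = 0 ↔ A j i = 0)

/-- Relators for `K₂(A,F)`: the Rehmann–Morita relations (L1)-(L7). -/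
def K2ARels {n : ℕ} (A : Matrix (Fin n) (Fin n) ℤ) : Set (FreeGroup (Fin n × Fˣ × Fˣ)) :=
  {r | (∃ (i : Fin n) (t u v : Fˣ),
          r = FreeGroup.of (i, t, u) * FreeGroup.of (i, t * u, v) *
              (FreeGroup.of (i, t, u * v) * FreeGroup.of (i, u, v))⁻¹) ∨
       (∃ i : Fin n, r = FreeGroup.of (i, 1, 1)) ∨
       (∃ (i : Fin n) (u v : Fˣ),
          r = FreeGroup.of (i, u, v) * (FreeGroup.of (i, u⁻¹, v⁻¹))⁻¹) ∨
       (∃ (i : Fin n) (u v w : Fˣ), (w : F) = 1 - (u : F) ∧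
          r = FreeGroup.of (i, u, v) * (FreeGroup.of (i, u, w * v))⁻¹) ∨
       (∃ (i j : Fin n) (u v : Fˣ), i ≠ j ∧
          r = FreeGroup.of (i, u, v ^ (A j i)) * (FreeGroup.of (j, u ^ (A i j), v))⁻¹) ∨
       (∃ (i j : Fin n) (t u v : Fˣ), i ≠ j ∧
          r = FreeGroup.of (i, t * u, v ^ (A j i)) *
              (FreeGroup.of (i, t, v ^ (A j i)) * FreeGroup.of (i, u, v ^ (A j i)))⁻¹) ∨
       (∃ (i j : Fin n) (t u v : Fˣ), i ≠ j ∧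
          r = FreeGroup.of (i, t ^ (A j i), u * v) *
              (FreeGroup.of (i, t ^ (A j i), u) * FreeGroup.of (i, t ^ (A j i), v))⁻¹)}

/-- `K₂(A,F)`: the abelian group generated by the symbols `c_i(u,v)` subject to (L1)-(L7). -/
def K2A {n : ℕ} (A : Matrix (Fin n) (Fin n) ℤ) : Type :=
  Abelianization (PresentedGroup (K2ARels F A))

noncomputable instance {n : ℕ} (A : Matrix (Fin n) (Fin n) ℤ) : CommGroup (K2A F A) :=
  inferInstanceAs (CommGroup (Abelianization _))

/-- The generator `c_i(u,v)` of `K₂(A,F)`. -/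
def K2A.c {n : ℕ} (A : Matrix (Fin n) (Fin n) ℤ) (i : Fin n) (u v : Fˣ) : K2A F A :=
  Abelianization.of (PresentedGroup.of (i, u, v))

open scoped Classical in
/-- `LGroup F p` is `K₂(F)` when `p` holds and `K₂(2,F)` otherwise.  Taking
`p = "the i-th column of A has an odd entry"` gives the factor `L_i`. -/
noncomputable def LGroup (p : Prop) : Type :=
  Abelianization (PresentedGroup (if p then K2Rels F else K2SLRels F))

noncomputable instance (p : Prop) : CommGroup (LGroup F p) :=
  inferInstanceAs (CommGroup (Abelianization _))

/-- The symbol `{u,v}` (Steinberg symbol resp. cocycle) in `LGroup F p`. -/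
noncomputable def LGroup.sym (p : Prop) (u v : Fˣ) : LGroup F p :=
  Abelianization.of (PresentedGroup.of (u, v))

/-- Relators `x_i^{a_{ji}} = x_j^{a_{ij}}` (`i < j`) for the auxiliary abelian group `G`. -/
def GRels {n : ℕ} (A : Matrix (Fin n) (Fin n) ℤ) : Set (FreeGroup (Fin n)) :=
  {r | ∃ i j : Fin n, i < j ∧ r = FreeGroup.of i ^ (A j i) * (FreeGroup.of j ^ (A i j))⁻¹}

/-- The abelian group `G = ⟨x_1,…,x_n ∣ x_i^{a_{ji}} = x_j^{a_{ij}}, [x_i,x_j] = 1⟩`. -/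
def GGroup {n : ℕ} (A : Matrix (Fin n) (Fin n) ℤ) : Type :=
  Abelianization (PresentedGroup (GRels A))

noncomputable instance {n : ℕ} (A : Matrix (Fin n) (Fin n) ℤ) : CommGroup (GGroup A) :=
  inferInstanceAs (CommGroup (Abelianization _))


/-! ### Auxiliary lemmas -/

private lemma pgRel {α : Type*} {rels : Set (FreeGroup α)} {r : FreeGroup α} (h : r ∈ rels) :
    PresentedGroup.mk rels r = 1 :=
  (QuotientGroup.eq_one_iff r).2 (Subgroup.subset_normalClosure h)

/-- The canonical hom from the free group to `K₂(F)`. -/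
private def symHom : FreeGroup (Fˣ × Fˣ) →* K2 F :=
  (Abelianization.of (G := PresentedGroup (K2Rels F))).comp (PresentedGroup.mk (K2Rels F))

private lemma symHom_of (u v : Fˣ) : symHom F (FreeGroup.of (u, v)) = K2.sym F u v := rfl

private lemma symHom_rel {r : FreeGroup (Fˣ × Fˣ)} (h : r ∈ K2Rels F) : symHom F r = 1 := by
  have h1 := pgRel h
  show Abelianization.of ((PresentedGroup.mk (K2Rels F)) r) = 1
  rw [h1, map_one]

private lemma sym_A1 (t u v : Fˣ) : K2.sym F (t * u) v = K2.sym F t v * K2.sym F u v := by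
  have h := symHom_rel F
    (r := FreeGroup.of (t * u, v) * (FreeGroup.of (t, v) * FreeGroup.of (u, v))⁻¹)
    (Or.inl ⟨t, u, v, rfl⟩)
  rw [map_mul, map_inv, map_mul, mul_inv_eq_one, symHom_of, symHom_of, symHom_of] at h
  exact h

private lemma sym_A2 (t u v : Fˣ) : K2.sym F t (u * v) = K2.sym F t u * K2.sym F t v := by
  have h := symHom_rel F
    (r := FreeGroup.of (t, u * v) * (FreeGroup.of (t, u) * FreeGroup.of (t, v))⁻¹)
    (Or.inr (Or.inl ⟨t, u, v, rfl⟩))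
  rw [map_mul, map_inv, map_mul, mul_inv_eq_one, symHom_of, symHom_of, symHom_of] at h
  exact h

private lemma sym_A3 (u w : Fˣ) (hw : (w : F) = 1 - (u : F)) : K2.sym F u w = 1 := by
  have h := symHom_rel F (r := FreeGroup.of (u, w)) (Or.inr (Or.inr ⟨u, w, hw, rfl⟩))
  rw [symHom_of] at h
  exact h

private lemma sym_one_left (v : Fˣ) : K2.sym F 1 v = 1 := by
  have h := sym_A1 F 1 1 v
  rw [one_mul] at h
  exact (left_eq_mul.mp h)

private lemma sym_one_right (u : Fˣ) : K2.sym F u 1 = 1 := by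
  have h := sym_A2 F u 1 1
  rw [one_mul] at h
  exact (left_eq_mul.mp h)

private lemma sym_inv_left (u v : Fˣ) : K2.sym F u⁻¹ v = (K2.sym F u v)⁻¹ := by
  have h := sym_A1 F u⁻¹ u v
  rw [inv_mul_cancel, sym_one_left] at h
  exact eq_inv_of_mul_eq_one_left h.symm

private lemma sym_inv_right (u v : Fˣ) : K2.sym F u v⁻¹ = (K2.sym F u v)⁻¹ := by
  have h := sym_A2 F u v⁻¹ v
  rw [inv_mul_cancel, sym_one_right] at h
  exact eq_inv_of_mul_eq_one_left h.symm

private lemma sym_inv_inv (u v : Fˣ) : K2.sym F u⁻¹ v⁻¹ = K2.sym F u v := by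
  rw [sym_inv_left, sym_inv_right, inv_inv]

section K2AAux

variable {n : ℕ} (A : Matrix (Fin n) (Fin n) ℤ)

/-- The canonical hom from the free group to `K₂(A,F)`. -/
private def cHom : FreeGroup (Fin n × Fˣ × Fˣ) →* K2A F A :=
  (Abelianization.of (G := PresentedGroup (K2ARels F A))).comp (PresentedGroup.mk (K2ARels F A))

private lemma cHom_of (i : Fin n) (u v : Fˣ) :
    cHom F A (FreeGroup.of (i, u, v)) = K2A.c F A i u v := rfl

private lemma cHom_rel {r : FreeGroup (Fin n × Fˣ × Fˣ)} (h : r ∈ K2ARels F A) :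
    cHom F A r = 1 := by
  have h1 := pgRel h
  show Abelianization.of ((PresentedGroup.mk (K2ARels F A)) r) = 1
  rw [h1, map_one]

private lemma c_mul_left {i j : Fin n} (hne : i ≠ j) (hji : A j i = -1) (t u v : Fˣ) :
    K2A.c F A i (t * u) v = K2A.c F A i t v * K2A.c F A i u v := by
  have h := cHom_rel F A
    (r := FreeGroup.of (i, t * u, v⁻¹ ^ (A j i)) *
        (FreeGroup.of (i, t, v⁻¹ ^ (A j i)) * FreeGroup.of (i, u, v⁻¹ ^ (A j i)))⁻¹)
    (Or.inr (Or.inr (Or.inr (Or.inr (Or.inr (Or.inl ⟨i, j, t, u, v⁻¹, hne, rfl⟩))))))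
  rw [hji] at h
  rw [show (v⁻¹ : Fˣ) ^ (-1 : ℤ) = v by rw [zpow_neg_one, inv_inv]] at h
  rw [map_mul, map_inv, map_mul, mul_inv_eq_one, cHom_of, cHom_of, cHom_of] at h
  exact h

private lemma c_mul_right {i j : Fin n} (hne : i ≠ j) (hji : A j i = -1) (t u v : Fˣ) :
    K2A.c F A i t (u * v) = K2A.c F A i t u * K2A.c F A i t v := by
  have h := cHom_rel F A
    (r := FreeGroup.of (i, t⁻¹ ^ (A j i), u * v) *
        (FreeGroup.of (i, t⁻¹ ^ (A j i), u) * FreeGroup.of (i, t⁻¹ ^ (A j i), v))⁻¹)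
    (Or.inr (Or.inr (Or.inr (Or.inr (Or.inr (Or.inr ⟨i, j, t⁻¹, u, v, hne, rfl⟩))))))
  rw [hji] at h
  rw [show (t⁻¹ : Fˣ) ^ (-1 : ℤ) = t by rw [zpow_neg_one, inv_inv]] at h
  rw [map_mul, map_inv, map_mul, mul_inv_eq_one, cHom_of, cHom_of, cHom_of] at h
  exact h

private lemma c_one_left {i j : Fin n} (hne : i ≠ j) (hji : A j i = -1) (v : Fˣ) :
    K2A.c F A i 1 v = 1 := by
  have h := c_mul_left F A hne hji 1 1 v
  rw [one_mul] at h
  exact left_eq_mul.mp h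

private lemma c_one_right {i j : Fin n} (hne : i ≠ j) (hji : A j i = -1) (u : Fˣ) :
    K2A.c F A i u 1 = 1 := by
  have h := c_mul_right F A hne hji u 1 1
  rw [one_mul] at h
  exact left_eq_mul.mp h

private lemma c_inv_left {i j : Fin n} (hne : i ≠ j) (hji : A j i = -1) (u v : Fˣ) :
    K2A.c F A i u⁻¹ v = (K2A.c F A i u v)⁻¹ := by
  have h := c_mul_left F A hne hji u⁻¹ u v
  rw [inv_mul_cancel, c_one_left F A hne hji] at h
  exact eq_inv_of_mul_eq_one_left h.symm

private lemma c_inv_right {i j : Fin n} (hne : i ≠ j) (hji : A j i = -1) (u v : Fˣ) :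
    K2A.c F A i u v⁻¹ = (K2A.c F A i u v)⁻¹ := by
  have h := c_mul_right F A hne hji u v⁻¹ v
  rw [inv_mul_cancel, c_one_right F A hne hji] at h
  exact eq_inv_of_mul_eq_one_left h.symm

private lemma c_st {i j : Fin n} (hne : i ≠ j) (hji : A j i = -1) (u w : Fˣ)
    (hw : (w : F) = 1 - (u : F)) : K2A.c F A i u w = 1 := by
  have h := cHom_rel F A
    (r := FreeGroup.of (i, u, (1 : Fˣ)) * (FreeGroup.of (i, u, w * 1))⁻¹)
    (Or.inr (Or.inr (Or.inr (Or.inl ⟨i, u, 1, w, hw, rfl⟩))))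
  rw [map_mul, map_inv, mul_inv_eq_one, cHom_of, cHom_of, mul_one,
    c_one_right F A hne hji] at h
  exact h.symm

private lemma c_adj {i j : Fin n} (hne : i ≠ j) (hij : A i j = -1) (hji : A j i = -1)
    (u v : Fˣ) : K2A.c F A i u v = K2A.c F A j u v := by
  have h := cHom_rel F A
    (r := FreeGroup.of (i, u, v⁻¹ ^ (A j i)) * (FreeGroup.of (j, u ^ (A i j), v⁻¹))⁻¹)
    (Or.inr (Or.inr (Or.inr (Or.inr (Or.inl ⟨i, j, u, v⁻¹, hne, rfl⟩)))))
  rw [hji, hij] at h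
  rw [show (v⁻¹ : Fˣ) ^ (-1 : ℤ) = v by rw [zpow_neg_one, inv_inv],
    show (u : Fˣ) ^ (-1 : ℤ) = u⁻¹ from zpow_neg_one u] at h
  rw [map_mul, map_inv, mul_inv_eq_one, cHom_of, cHom_of] at h
  -- h : c i u v = c j u⁻¹ v⁻¹
  rw [h, c_inv_left F A hne.symm hij u v⁻¹, c_inv_right F A hne.symm hij u v, inv_inv]

end K2AAux

/-- If `A` is an `n×n` simply-laced indecomposable GCM (`n ≥ 2`), i.e. every
off-diagonal entry is `0` or `-1` and the graph with an edge `i ~ j` whenever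
`a_{ij} ≠ 0` is connected, then `K₂(A,F) ≅ K₂(F)`. -/
theorem K2A_simply_laced (n : ℕ) (hn : 2 ≤ n) (A : Matrix (Fin n) (Fin n) ℤ)
    (hA : IsGCM A) (hsl : ∀ i j, i ≠ j → A i j = 0 ∨ A i j = -1)
    (hconn : (SimpleGraph.fromRel fun i j => A i j ≠ 0).Connected)
    (F : Type) [Field F] :
    Nonempty (K2A F A ≃* K2 F) := by
  classical
  -- structure of the matrix
  have hboth : ∀ i j : Fin n, i ≠ j → (A i j = 0 ∧ A j i = 0) ∨ (A i j = -1 ∧ A j i = -1) := by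
    intro i j hij
    rcases hsl i j hij with h0 | h1
    · exact Or.inl ⟨h0, (hA.2.2 i j).mp h0⟩
    · rcases hsl j i hij.symm with h0' | h1'
      · have := (hA.2.2 j i).mp h0'
        omega
      · exact Or.inr ⟨h1, h1'⟩
  -- every vertex has a neighbour
  have hnbr : ∀ i : Fin n, ∃ j, i ≠ j ∧ A i j = -1 ∧ A j i = -1 := by
    intro i
    have : Nontrivial (Fin n) :=
      ⟨⟨⟨0, by omega⟩, ⟨1, by omega⟩, by simp [Fin.ext_iff]⟩⟩
    obtain ⟨k, hk⟩ := exists_ne i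
    obtain ⟨w⟩ := hconn.preconnected i k
    cases w with
    | nil => exact absurd rfl hk
    | cons hadj p =>
      rename_i b
      rw [SimpleGraph.fromRel_adj] at hadj
      obtain ⟨hne, hor⟩ := hadj
      rcases hboth i b hne with ⟨h0, h0'⟩ | ⟨h1, h1'⟩
      · rcases hor with h | h
        · exact absurd h0 h
        · exact absurd h0' h
      · exact ⟨b, hne, h1, h1'⟩
  -- fix a base vertex and its neighbour
  obtain ⟨i0⟩ : Nonempty (Fin n) := ⟨⟨0, by omega⟩⟩
  -- all generators with the same (u,v) coincide
  have hceq : ∀ i : Fin n, ∀ u v : Fˣ, K2A.c F A i u v = K2A.c F A i0 u v := by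
    intro i
    obtain ⟨w⟩ := hconn.preconnected i i0
    induction w with
    | nil => intro u v; rfl
    | cons hadj p ih =>
      rename_i x b _
      intro u v
      rw [SimpleGraph.fromRel_adj] at hadj
      obtain ⟨hne, hor⟩ := hadj
      have h1 : A x b = -1 ∧ A b x = -1 := by
        rcases hboth x b hne with ⟨h0, h0'⟩ | h1
        · rcases hor with h | h
          · exact absurd h0 h
          · exact absurd h0' h
        · exact h1
      rw [c_adj F A hne h1.1 h1.2, ih]
  obtain ⟨j0, hne0, hij0, hji0⟩ := hnbr i0
  -- the homomorphism K₂(A,F) → K₂(F)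
  have hf : ∀ r ∈ K2ARels F A,
      FreeGroup.lift (fun p : Fin n × Fˣ × Fˣ => K2.sym F p.2.1 p.2.2) r = 1 := by
    intro r hr
    rcases hr with ⟨i, t, u, v, rfl⟩ | ⟨i, rfl⟩ | ⟨i, u, v, rfl⟩ | ⟨i, u, v, w, hw, rfl⟩ |
      ⟨i, j, u, v, hne, rfl⟩ | ⟨i, j, t, u, v, hne, rfl⟩ | ⟨i, j, t, u, v, hne, rfl⟩
    · simp only [map_mul, map_inv, FreeGroup.lift_apply_of]
      rw [mul_inv_eq_one, sym_A1, sym_A2, mul_assoc]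
    · simp only [FreeGroup.lift_apply_of]
      exact sym_one_left F 1
    · simp only [map_mul, map_inv, FreeGroup.lift_apply_of]
      rw [mul_inv_eq_one, sym_inv_inv]
    · simp only [map_mul, map_inv, FreeGroup.lift_apply_of]
      rw [mul_inv_eq_one, sym_A2, sym_A3 F u w hw, one_mul]
    · rcases hboth i j hne with ⟨h0, h0'⟩ | ⟨h1, h1'⟩
      · simp only [h0, h0', map_mul, map_inv, FreeGroup.lift_apply_of, zpow_zero]
        rw [mul_inv_eq_one, sym_one_right, sym_one_left]
      · simp only [h1, h1', map_mul, map_inv, FreeGroup.lift_apply_of, zpow_neg_one]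
        rw [mul_inv_eq_one, sym_inv_right, sym_inv_left]
    · rcases hboth i j hne with ⟨h0, h0'⟩ | ⟨h1, h1'⟩
      · simp only [h0', map_mul, map_inv, FreeGroup.lift_apply_of, zpow_zero]
        rw [mul_inv_eq_one, sym_one_right, sym_one_right, sym_one_right, one_mul]
      · simp only [h1', map_mul, map_inv, FreeGroup.lift_apply_of, zpow_neg_one]
        rw [mul_inv_eq_one]
        exact sym_A1 F t u v⁻¹
    · rcases hboth i j hne with ⟨h0, h0'⟩ | ⟨h1, h1'⟩
      · simp only [h0', map_mul, map_inv, FreeGroup.lift_apply_of, zpow_zero]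
        rw [mul_inv_eq_one, sym_one_left, sym_one_left, sym_one_left, one_mul]
      · simp only [h1', map_mul, map_inv, FreeGroup.lift_apply_of, zpow_neg_one]
        rw [mul_inv_eq_one]
        exact sym_A2 F t⁻¹ u v
  -- the homomorphism K₂(F) → K₂(A,F)
  have hg : ∀ r ∈ K2Rels F,
      FreeGroup.lift (fun p : Fˣ × Fˣ => K2A.c F A i0 p.1 p.2) r = 1 := by
    intro r hr
    rcases hr with ⟨t, u, v, rfl⟩ | ⟨t, u, v, rfl⟩ | ⟨u, w, hw, rfl⟩
    · simp only [map_mul, map_inv, FreeGroup.lift_apply_of]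
      rw [mul_inv_eq_one]
      exact c_mul_left F A hne0 hji0 t u v
    · simp only [map_mul, map_inv, FreeGroup.lift_apply_of]
      rw [mul_inv_eq_one]
      exact c_mul_right F A hne0 hji0 t u v
    · simp only [FreeGroup.lift_apply_of]
      exact c_st F A hne0 hji0 u w hw
  let Φ : K2A F A →* K2 F := Abelianization.lift (PresentedGroup.toGroup hf)
  let Ψ : K2 F →* K2A F A := Abelianization.lift (PresentedGroup.toGroup hg)
  have hΦ : ∀ (i : Fin n) (u v : Fˣ), Φ (K2A.c F A i u v) = K2.sym F u v := by
    intro i u v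
    show Abelianization.lift (PresentedGroup.toGroup hf)
      (Abelianization.of (PresentedGroup.of (i, u, v))) = _
    rw [Abelianization.lift_apply_of, PresentedGroup.toGroup.of]
  have hΨ : ∀ (u v : Fˣ), Ψ (K2.sym F u v) = K2A.c F A i0 u v := by
    intro u v
    show Abelianization.lift (PresentedGroup.toGroup hg)
      (Abelianization.of (PresentedGroup.of (u, v))) = _
    rw [Abelianization.lift_apply_of, PresentedGroup.toGroup.of]
  have hleft : Ψ.comp Φ = MonoidHom.id (K2A F A) := by
    apply Abelianization.hom_ext
    apply PresentedGroup.ext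
    rintro ⟨i, u, v⟩
    show Ψ (Φ (K2A.c F A i u v)) = K2A.c F A i u v
    rw [hΦ, hΨ, ← hceq i u v]
  have hright : Φ.comp Ψ = MonoidHom.id (K2 F) := by
    apply Abelianization.hom_ext
    apply PresentedGroup.ext
    rintro ⟨u, v⟩
    show Φ (Ψ (K2.sym F u v)) = K2.sym F u v
    rw [hΨ, hΦ]
  exact ⟨{ toFun := Φ, invFun := Ψ, map_mul' := map_mul Φ,
           left_inv := fun x => DFunLike.congr_fun hleft x,
           right_inv := fun x => DFunLike.congr_fun hright x }⟩
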